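/- Let k ≥ 4 be even and m ≥ 0 integers, b(θ) = kθ/2 − 2πm·cos(θ), and b_{m+1}(θ) = kθ/2 − 2π(m+1)·cos(θ). If α₁ < α₂ are consecutive zeros of cos(b_{m+1}(θ)) in (π/2, 2π/3), then there exists exactly one β ∈ (α₁, α₂) with cos(b(β)) = 0. -/
import Mathlib


open Real Set

theorem stmt6 (k m : ℤ) (hk : 4 ≤ k) (hke : Even k) (hm : 0 ≤ m)
    (b bm1 : ℝ → ℝ)
    (hb : ∀ θ, b θ = (k : ℝ) * θ / 2 - 2 * π * (m : ℝ) * Real.cos θ)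
    (hbm1 : ∀ θ, bm1 θ = (k : ℝ) * θ / 2 - 2 * π * ((m : ℝ) + 1) * Real.cos θ)
    (α₁ α₂ : ℝ) (hα₁ : α₁ ∈ Set.Ioo (π / 2) (2 * π / 3)) (hα₂ : α₂ ∈ Set.Ioo (π / 2) (2 * π / 3))
    (h12 : α₁ < α₂)
    (hz1 : Real.cos (bm1 α₁) = 0) (hz2 : Real.cos (bm1 α₂) = 0)
    (hcons : ∀ θ ∈ Set.Ioo α₁ α₂, Real.cos (bm1 θ) ≠ 0) :
    ∃! β, β ∈ Set.Ioo α₁ α₂ ∧ Real.cos (b β) = 0 := by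
  have hπ := Real.pi_pos
  obtain ⟨ha11, ha12⟩ := hα₁
  obtain ⟨ha21, ha22⟩ := hα₂
  have hk' : (4:ℝ) ≤ (k:ℝ) := by exact_mod_cast hk
  have hm' : (0:ℝ) ≤ (m:ℝ) := by exact_mod_cast hm
  -- cos(2π/3) = -1/2
  have h23 : Real.cos (2*π/3) = -(1/2) := by
    rw [show (2*π/3 : ℝ) = π - π/3 by ring, Real.cos_pi_sub, Real.cos_pi_div_three]
  -- cos bounds on the open interval
  have hcosmem : ∀ x, π/2 < x → x < 2*π/3 → -(1/2) < Real.cos x ∧ Real.cos x < 0 := by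
    intro x hx1 hx2
    refine ⟨?_, Real.cos_neg_of_pi_div_two_lt_of_lt hx1 (by linarith)⟩
    rw [← h23]
    exact Real.strictAntiOn_cos ⟨by linarith, by linarith⟩ ⟨by linarith, by linarith⟩ hx2
  -- generic monotonicity
  have hmono : ∀ (M:ℝ), 0 ≤ M → ∀ x y, π/2 < x → x < y → y < 2*π/3 →
      (k:ℝ)*x/2 - 2*π*M*Real.cos x < (k:ℝ)*y/2 - 2*π*M*Real.cos y := by
    intro M hM x y hx hxy hy
    have hcxy : Real.cos y ≤ Real.cos x :=
      le_of_lt (Real.strictAntiOn_cos ⟨by linarith, by linarith⟩ ⟨by linarith, by linarith⟩ hxy)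
    nlinarith [mul_nonneg (mul_nonneg (by linarith : (0:ℝ) ≤ 2*π) hM)
      (sub_nonneg.2 hcxy), mul_lt_mul_of_pos_left hxy (by linarith : (0:ℝ) < (k:ℝ)/2)]
  have hbmono : ∀ x y, π/2 < x → x < y → y < 2*π/3 → b x < b y := by
    intro x y hx hxy hy
    rw [hb, hb]; exact hmono m hm' x y hx hxy hy
  have hbm1mono : ∀ x y, π/2 < x → x < y → y < 2*π/3 → bm1 x < bm1 y := by
    intro x y hx hxy hy
    rw [hbm1, hbm1]; exact hmono ((m:ℝ)+1) (by linarith) x y hx hxy hy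
  -- continuity
  have hbc : Continuous b := by
    have : b = fun θ => (k:ℝ)*θ/2 - 2*π*(m:ℝ)*Real.cos θ := funext hb
    rw [this]; fun_prop
  have hbm1c : Continuous bm1 := by
    have : bm1 = fun θ => (k:ℝ)*θ/2 - 2*π*((m:ℝ)+1)*Real.cos θ := funext hbm1
    rw [this]; fun_prop
  -- b θ = bm1 θ + 2π cos θ
  have hdiff : ∀ θ, b θ = bm1 θ + 2*π*Real.cos θ := by intro θ; rw [hb, hbm1]; ring
  obtain ⟨n₁, hn₁⟩ := Real.cos_eq_zero_iff.1 hz1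
  obtain ⟨n₂, hn₂⟩ := Real.cos_eq_zero_iff.1 hz2
  have hord : bm1 α₁ < bm1 α₂ := hbm1mono _ _ ha11 h12 ha22
  have hn12 : n₁ < n₂ := by
    by_contra h
    push_neg at h
    have h' : (n₂:ℝ) ≤ (n₁:ℝ) := by exact_mod_cast h
    rw [hn₁, hn₂] at hord
    nlinarith [mul_le_mul_of_nonneg_right h' hπ.le]
  -- consecutiveness : bm1 α₂ = bm1 α₁ + π
  have hstep : bm1 α₂ = bm1 α₁ + π := by
    by_contra hne
    have hn2ge : n₁ + 2 ≤ n₂ := by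
      rcases lt_or_ge n₂ (n₁ + 2) with h | h
      · have : n₂ = n₁ + 1 := by omega
        exfalso; apply hne
        rw [hn₁, hn₂, this]; push_cast; ring
      · exact h
    have hmid : bm1 α₁ + π ∈ Set.Ioo (bm1 α₁) (bm1 α₂) := by
      constructor
      · linarith
      · rw [hn₁, hn₂]
        have : (n₁:ℝ) + 2 ≤ (n₂:ℝ) := by exact_mod_cast hn2ge
        nlinarith
    obtain ⟨θ, hθmem, hθval⟩ := intermediate_value_Ioo (le_of_lt h12) hbm1c.continuousOn hmid
    apply hcons θ hθmem
    rw [hθval, Real.cos_add_pi, hz1, neg_zero]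
  have hb1 : bm1 α₁ - π < b α₁ ∧ b α₁ < bm1 α₁ := by
    obtain ⟨h1, h2⟩ := hcosmem α₁ ha11 ha12
    rw [hdiff α₁]; constructor <;> nlinarith
  have hb2 : bm1 α₁ < b α₂ ∧ b α₂ < bm1 α₁ + π := by
    obtain ⟨h1, h2⟩ := hcosmem α₂ ha21 ha22
    rw [hdiff α₂, hstep]; constructor <;> nlinarith
  -- existence
  obtain ⟨β, hβmem, hβval⟩ := intermediate_value_Ioo (le_of_lt h12) hbc.continuousOn
    ⟨hb1.2, hb2.1⟩
  have hβcos : Real.cos (b β) = 0 := by rw [hβval, hz1]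
  -- uniqueness core: any zero γ in the interval has b γ = bm1 α₁
  have hval : ∀ γ ∈ Set.Ioo α₁ α₂, Real.cos (b γ) = 0 → b γ = bm1 α₁ := by
    rintro γ ⟨hg1, hg2⟩ hgcos
    obtain ⟨j, hj⟩ := Real.cos_eq_zero_iff.1 hgcos
    have hlow : b α₁ < b γ := hbmono _ _ ha11 hg1 (by linarith)
    have hhigh : b γ < b α₂ := hbmono _ _ (by linarith) hg2 ha22
    have h1 : bm1 α₁ - π < b γ := by linarith [hb1.1]
    have h2 : b γ < bm1 α₁ + π := by linarith [hb2.2]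
    rw [hj, hn₁] at h1 h2
    rw [hj, hn₁]
    have i1 : (2*(n₁:ℝ)-1) < 2*(j:ℝ)+1 := by
      by_contra hcon; push_neg at hcon
      have := mul_le_mul_of_nonneg_right hcon hπ.le
      linarith
    have i2 : (2*(j:ℝ)+1) < 2*(n₁:ℝ)+3 := by
      by_contra hcon; push_neg at hcon
      have := mul_le_mul_of_nonneg_right hcon hπ.le
      linarith
    have i1' : 2*n₁ - 1 < 2*j + 1 := by exact_mod_cast i1
    have i2' : 2*j + 1 < 2*n₁ + 3 := by exact_mod_cast i2
    have : j = n₁ := by omega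
    rw [this]
  refine ⟨β, ⟨hβmem, hβcos⟩, ?_⟩
  rintro γ ⟨hγmem, hγcos⟩
  have hgc : b γ = bm1 α₁ := hval γ hγmem hγcos
  have hbc' : b β = bm1 α₁ := hβval
  rcases lt_trichotomy γ β with h | h | h
  · exfalso
    have := hbmono γ β (by linarith [hγmem.1]) h (by linarith [hβmem.2])
    rw [hgc, hbc'] at this; exact lt_irrefl _ this
  · exact h
  · exfalso
    have := hbmono β γ (by linarith [hβmem.1]) h (by linarith [hγmem.2])
    rw [hgc, hbc'] at this; exact lt_irrefl _ this
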